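/- arXiv:2009.13738 — 2 statements merged into one kernel-verified Lean document; each statement's English description precedes it below -/
import Mathlib

section
/- Let S_2 be a binomial random variable Bin(N, 1/k) with mean c = N/k, and let S_1 = S_2' + 1 where S_2' is an independent copy of Bin(N, 1/k). If c ≥ 14·ln(2/δ)/ε² for ε ∈ (0,1] and δ ∈ (0, 0.2907], then P[S_1 ≥ c·e^{ε/2}] + P[S_2 ≤ c·e^{-ε/2}] ≤ δ. -/
section helpers
open Real Finset

lemma exp_upper4 {x : ℝ} (h0 : 0 ≤ x) (h1 : x ≤ 1) :
    Real.exp x ≤ 1 + x + x^2/2 + x^3/6 + x^4 * (5/96) := by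
  have hb := Real.exp_bound (x := x) (by rwa [abs_of_nonneg h0]) (n := 4) (by norm_num)
  rw [abs_of_nonneg h0] at hb
  have h2 := (abs_le.mp hb).2
  simp [Finset.sum_range_succ, Nat.factorial] at h2
  nlinarith [h2]

lemma exp_neg_upper4 {x : ℝ} (h0 : 0 ≤ x) (h1 : x ≤ 1) :
    Real.exp (-x) ≤ 1 - x + x^2/2 - x^3/6 + x^4 * (5/96) := by
  have hb := Real.exp_bound (x := -x) (by rwa [abs_neg, abs_of_nonneg h0]) (n := 4) (by norm_num)
  rw [abs_neg, abs_of_nonneg h0] at hb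
  have h2 := (abs_le.mp hb).2
  simp [Finset.sum_range_succ, Nat.factorial] at h2
  nlinarith [h2]

lemma g_lower {x : ℝ} (h0 : 0 ≤ x) (h1 : x ≤ 1/2) :
    x^2/2 ≤ x * Real.exp x - Real.exp x + 1 := by
  have hE := exp_upper4 h0 (by linarith)
  have hmul := mul_le_mul_of_nonpos_right hE (by linarith : x - 1 ≤ 0)
  have hrw : x * Real.exp x - Real.exp x + 1 = Real.exp x * (x - 1) + 1 := by ring
  rw [hrw]
  nlinarith [pow_nonneg h0 3, pow_nonneg h0 4, pow_nonneg h0 5]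

lemma h_lower {x : ℝ} (h0 : 0 ≤ x) (h1 : x ≤ 1/2) :
    2 * x^2 / 7 ≤ 1 - (1 + x) * Real.exp (-x) := by
  have hE := exp_neg_upper4 h0 (by linarith)
  have hmul := mul_le_mul_of_nonneg_left hE (by linarith : (0:ℝ) ≤ 1 + x)
  have hx3 : x^3 ≤ x^2 * (1/2) := by nlinarith [sq_nonneg x]
  have hx5 : x^5 ≤ x^2 * (1/8) := by
    nlinarith [sq_nonneg x, pow_nonneg h0 3, pow_nonneg h0 2, sq_nonneg (x - 1/2),
      mul_nonneg (mul_nonneg h0 h0) h0]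
  nlinarith [pow_nonneg h0 4]

lemma mgf_bound (N : ℕ) (p s : ℝ) (hp0 : 0 ≤ p) (hp1 : p ≤ 1) :
    ∑ i ∈ Finset.range (N + 1), (N.choose i : ℝ) * p ^ i * (1 - p) ^ (N - i) * Real.exp (s * i)
      ≤ Real.exp ((N : ℝ) * p * (Real.exp s - 1)) := by
  have hsum : ∑ i ∈ Finset.range (N + 1), (N.choose i : ℝ) * p ^ i * (1 - p) ^ (N - i) * Real.exp (s * i)
      = (p * Real.exp s + (1 - p)) ^ N := by
    rw [add_pow]
    refine Finset.sum_congr rfl fun i hi => ?_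
    rw [mul_pow, ← Real.exp_nat_mul]
    ring_nf
  rw [hsum]
  have hq : (0:ℝ) ≤ 1 - p := by linarith
  have hbase0 : 0 ≤ p * Real.exp s + (1 - p) :=
    add_nonneg (mul_nonneg hp0 (Real.exp_nonneg s)) hq
  have hbase : p * Real.exp s + (1 - p) ≤ Real.exp (p * (Real.exp s - 1)) := by
    have := Real.add_one_le_exp (p * (Real.exp s - 1))
    linarith
  calc (p * Real.exp s + (1 - p)) ^ N ≤ (Real.exp (p * (Real.exp s - 1))) ^ N :=
        pow_le_pow_left₀ hbase0 hbase N
    _ = Real.exp ((N : ℝ) * p * (Real.exp s - 1)) := by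
        rw [← Real.exp_nat_mul]; ring_nf

lemma tail_upper (N : ℕ) (p t a : ℝ) (hp0 : 0 ≤ p) (hp1 : p ≤ 1) (ht : 0 ≤ t) :
    (∑ i ∈ Finset.range (N + 1),
        if ((i : ℝ) + 1) ≥ a then (N.choose i : ℝ) * p ^ i * (1 - p) ^ (N - i) else 0)
      ≤ Real.exp (t * (1 - a) + (N : ℝ) * p * (Real.exp t - 1)) := by
  have hq : (0:ℝ) ≤ 1 - p := by linarith
  have key : ∀ i ∈ Finset.range (N + 1),
      (if ((i : ℝ) + 1) ≥ a then (N.choose i : ℝ) * p ^ i * (1 - p) ^ (N - i) else 0)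
      ≤ Real.exp (t * (1 - a)) * ((N.choose i : ℝ) * p ^ i * (1 - p) ^ (N - i) * Real.exp (t * i)) := by
    intro i _
    have hpmf : 0 ≤ (N.choose i : ℝ) * p ^ i * (1 - p) ^ (N - i) := by positivity
    split_ifs with h
    · calc (N.choose i : ℝ) * p ^ i * (1 - p) ^ (N - i)
          ≤ (N.choose i : ℝ) * p ^ i * (1 - p) ^ (N - i) * Real.exp (t * ((i : ℝ) + 1 - a)) :=
            le_mul_of_one_le_right hpmf (Real.one_le_exp (by nlinarith))
        _ = Real.exp (t * (1 - a)) * ((N.choose i : ℝ) * p ^ i * (1 - p) ^ (N - i) * Real.exp (t * i)) := by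
            rw [show t * ((i : ℝ) + 1 - a) = t * (1 - a) + t * i by ring, Real.exp_add]; ring
    · positivity
  calc (∑ i ∈ Finset.range (N + 1),
        if ((i : ℝ) + 1) ≥ a then (N.choose i : ℝ) * p ^ i * (1 - p) ^ (N - i) else 0)
      ≤ ∑ i ∈ Finset.range (N + 1),
          Real.exp (t * (1 - a)) * ((N.choose i : ℝ) * p ^ i * (1 - p) ^ (N - i) * Real.exp (t * i)) :=
        Finset.sum_le_sum key
    _ = Real.exp (t * (1 - a)) *
          ∑ i ∈ Finset.range (N + 1), (N.choose i : ℝ) * p ^ i * (1 - p) ^ (N - i) * Real.exp (t * i) := by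
        rw [Finset.mul_sum]
    _ ≤ Real.exp (t * (1 - a)) * Real.exp ((N : ℝ) * p * (Real.exp t - 1)) :=
        mul_le_mul_of_nonneg_left (mgf_bound N p t hp0 hp1) (Real.exp_nonneg _)
    _ = Real.exp (t * (1 - a) + (N : ℝ) * p * (Real.exp t - 1)) := (Real.exp_add _ _).symm

lemma tail_lower (N : ℕ) (p t b : ℝ) (hp0 : 0 ≤ p) (hp1 : p ≤ 1) (ht : 0 ≤ t) :
    (∑ i ∈ Finset.range (N + 1),
        if (i : ℝ) ≤ b then (N.choose i : ℝ) * p ^ i * (1 - p) ^ (N - i) else 0)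
      ≤ Real.exp (t * b + (N : ℝ) * p * (Real.exp (-t) - 1)) := by
  have hq : (0:ℝ) ≤ 1 - p := by linarith
  have key : ∀ i ∈ Finset.range (N + 1),
      (if (i : ℝ) ≤ b then (N.choose i : ℝ) * p ^ i * (1 - p) ^ (N - i) else 0)
      ≤ Real.exp (t * b) * ((N.choose i : ℝ) * p ^ i * (1 - p) ^ (N - i) * Real.exp ((-t) * i)) := by
    intro i _
    have hpmf : 0 ≤ (N.choose i : ℝ) * p ^ i * (1 - p) ^ (N - i) := by positivity
    split_ifs with h
    · calc (N.choose i : ℝ) * p ^ i * (1 - p) ^ (N - i)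
          ≤ (N.choose i : ℝ) * p ^ i * (1 - p) ^ (N - i) * Real.exp (t * (b - (i : ℝ))) :=
            le_mul_of_one_le_right hpmf (Real.one_le_exp (by nlinarith))
        _ = Real.exp (t * b) * ((N.choose i : ℝ) * p ^ i * (1 - p) ^ (N - i) * Real.exp ((-t) * i)) := by
            rw [show t * (b - (i : ℝ)) = t * b + (-t) * i by ring, Real.exp_add]; ring
    · positivity
  calc (∑ i ∈ Finset.range (N + 1),
        if (i : ℝ) ≤ b then (N.choose i : ℝ) * p ^ i * (1 - p) ^ (N - i) else 0)
      ≤ ∑ i ∈ Finset.range (N + 1),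
          Real.exp (t * b) * ((N.choose i : ℝ) * p ^ i * (1 - p) ^ (N - i) * Real.exp ((-t) * i)) :=
        Finset.sum_le_sum key
    _ = Real.exp (t * b) *
          ∑ i ∈ Finset.range (N + 1), (N.choose i : ℝ) * p ^ i * (1 - p) ^ (N - i) * Real.exp ((-t) * i) := by
        rw [Finset.mul_sum]
    _ ≤ Real.exp (t * b) * Real.exp ((N : ℝ) * p * (Real.exp (-t) - 1)) :=
        mul_le_mul_of_nonneg_left (mgf_bound N p (-t) hp0 hp1) (Real.exp_nonneg _)
    _ = Real.exp (t * b + (N : ℝ) * p * (Real.exp (-t) - 1)) := (Real.exp_add _ _).symm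

end helpers

/-- Chernoff tail bound for the dummy blanket: with `S₂ ~ Bin(N, 1/k)` and
`S₁ = Bin(N, 1/k) + 1`, if `c = N/k ≥ 14 ln(2/δ)/ε²` then
`P[S₁ ≥ c e^{ε/2}] + P[S₂ ≤ c e^{-ε/2}] ≤ δ`. -/
theorem dummy_blanket_tail (N k : ℕ) (hN : 0 < N) (hk : 0 < k)
    (ε δ : ℝ) (hε0 : 0 < ε) (hε1 : ε ≤ 1) (hδ0 : 0 < δ) (hδ1 : δ ≤ 0.2907)
    (c : ℝ) (hc : c = (N : ℝ) / k)
    (hcbound : c ≥ 14 * Real.log (2 / δ) / ε ^ 2) :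
    (∑ i ∈ Finset.range (N + 1),
        if ((i : ℝ) + 1) ≥ c * Real.exp (ε / 2) then
          (N.choose i : ℝ) * (1 / k) ^ i * (1 - 1 / k) ^ (N - i) else 0) +
      (∑ i ∈ Finset.range (N + 1),
        if (i : ℝ) ≤ c * Real.exp (-ε / 2) then
          (N.choose i : ℝ) * (1 / k) ^ i * (1 - 1 / k) ^ (N - i) else 0)
      ≤ δ := by
  have hk1 : (1:ℝ) ≤ (k:ℝ) := by exact_mod_cast hk
  have hp0 : (0:ℝ) ≤ 1 / (k:ℝ) := by positivity
  have hp1 : (1:ℝ) / (k:ℝ) ≤ 1 := by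
    rw [div_le_one (by linarith)]; exact hk1
  have hNp : (N : ℝ) * (1 / (k:ℝ)) = c := by rw [hc]; ring
  set L := Real.log (2 / δ) with hLdef
  -- L ≥ 2/3
  have hL23 : 2/3 ≤ L := by
    rw [hLdef, Real.le_log_iff_exp_le (by positivity)]
    have h1 : Real.exp (2/3) < 2.7182818286 :=
      lt_of_le_of_lt (Real.exp_le_exp.mpr (by norm_num)) Real.exp_one_lt_d9
    have h2 : (2.7182818286 : ℝ) ≤ 2 / δ := by
      rw [le_div_iff₀ hδ0]; nlinarith
    linarith
  have hL0 : 0 < L := by linarith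
  have hc0 : 0 < c := lt_of_lt_of_le (by positivity) hcbound
  have hεsq : 14 * L ≤ c * ε ^ 2 := by
    rw [ge_iff_le, div_le_iff₀ (by positivity)] at hcbound
    linarith
  have hx0 : (0:ℝ) ≤ ε / 2 := by linarith
  have hx12 : ε / 2 ≤ 1/2 := by linarith
  have hlogδ2 : Real.log (δ / 2) = -L := by
    rw [hLdef, ← Real.log_inv, inv_div]
  -- upper tail
  have hup : (∑ i ∈ Finset.range (N + 1),
        if ((i : ℝ) + 1) ≥ c * Real.exp (ε / 2) then
          (N.choose i : ℝ) * (1 / k) ^ i * (1 - 1 / k) ^ (N - i) else 0) ≤ δ / 2 := by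
    have h1 := tail_upper N (1 / (k:ℝ)) (ε/2) (c * Real.exp (ε/2)) hp0 hp1 hx0
    rw [hNp] at h1
    refine le_trans h1 ?_
    rw [show δ / 2 = Real.exp (Real.log (δ / 2)) from (Real.exp_log (by positivity)).symm]
    apply Real.exp_le_exp.mpr
    rw [hlogδ2]
    have hG := g_lower hx0 hx12
    nlinarith [mul_le_mul_of_nonneg_left hG hc0.le]
  -- lower tail
  have hlo : (∑ i ∈ Finset.range (N + 1),
        if (i : ℝ) ≤ c * Real.exp (-ε / 2) then
          (N.choose i : ℝ) * (1 / k) ^ i * (1 - 1 / k) ^ (N - i) else 0) ≤ δ / 2 := by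
    have hneg : -ε / 2 = -(ε / 2) := by ring
    rw [hneg]
    have h1 := tail_lower N (1 / (k:ℝ)) (ε/2) (c * Real.exp (-(ε/2))) hp0 hp1 hx0
    rw [hNp] at h1
    refine le_trans h1 ?_
    rw [show δ / 2 = Real.exp (Real.log (δ / 2)) from (Real.exp_log (by positivity)).symm]
    apply Real.exp_le_exp.mpr
    rw [hlogδ2]
    have hH := h_lower hx0 hx12
    nlinarith [mul_le_mul_of_nonneg_left hH hc0.le]
  linarith
end

section
/- In the pureDUMP protocol, the mean squared error (1/k)·Σ_{v∈D} E[(f̃_v − f_v)²] equals s(k−1)/(n·k²). -/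
set_option linter.unusedSectionVars false
set_option maxHeartbeats 1000000

section aux
variable {ι κ : Type} [Fintype ι] [DecidableEq ι] [Fintype κ] [DecidableEq κ]

lemma card_ne (p : ι) : Fintype.card {j : ι // j ≠ p} = Fintype.card ι - 1 := by
  simp [Fintype.card_subtype_compl]

lemma L1 (p : ι) (g : κ → ℝ) :
    ∑ ω : ι → κ, g (ω p) =
      (Fintype.card κ : ℝ) ^ (Fintype.card ι - 1) * ∑ a, g a := by
  rw [← (Equiv.funSplitAt p κ).symm.sum_comp (fun ω => g (ω p))]
  simp only [Fintype.sum_prod_type, Equiv.funSplitAt_symm_apply, dif_pos rfl]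
  rw [Finset.sum_comm]
  simp [Finset.mul_sum, card_ne p, Fintype.card_fun, mul_comm]

lemma L2 (p q : ι) (hpq : q ≠ p) (g h : κ → ℝ) :
    ∑ ω : ι → κ, g (ω p) * h (ω q) =
      (Fintype.card κ : ℝ) ^ (Fintype.card ι - 2) * ((∑ a, g a) * (∑ b, h b)) := by
  rw [← (Equiv.funSplitAt p κ).symm.sum_comp (fun ω => g (ω p) * h (ω q))]
  simp only [Fintype.sum_prod_type, Equiv.funSplitAt_symm_apply, dif_pos rfl,
    dif_neg hpq]
  have key := L1 (ι := {j : ι // j ≠ p}) (κ := κ) ⟨q, hpq⟩ h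
  rw [card_ne p] at key
  have h2 : Fintype.card ι - 1 - 1 = Fintype.card ι - 2 := by omega
  calc ∑ a : κ, ∑ f : {j : ι // j ≠ p} → κ, g a * h (f ⟨q, hpq⟩)
      = ∑ a : κ, g a * ∑ f : {j : ι // j ≠ p} → κ, h (f ⟨q, hpq⟩) := by
        simp [Finset.mul_sum]
    _ = ∑ a : κ, g a * ((Fintype.card κ : ℝ) ^ (Fintype.card ι - 1 - 1) * ∑ b, h b) := by
        rw [key]
    _ = (Fintype.card κ : ℝ) ^ (Fintype.card ι - 2) * ((∑ a, g a) * (∑ b, h b)) := by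
        rw [h2, ← Finset.sum_mul]; ring
end aux

lemma key_var (k : ℕ) (hk : 0 < k) (ι : Type) [Fintype ι] [DecidableEq ι] (v : Fin k) :
    ∑ ω : ι → Fin k, ((1:ℝ)/k)^(Fintype.card ι) *
      ((∑ p : ι, if ω p = v then (1:ℝ) else 0) - (Fintype.card ι : ℝ)/k)^2
    = (Fintype.card ι : ℝ) * (k-1) / k^2 := by
  have hK : (k:ℝ) ≠ 0 := Nat.cast_ne_zero.mpr hk.ne'
  set m := Fintype.card ι with hm
  set g : Fin k → ℝ := fun a => if a = v then (1:ℝ) else 0 with hg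
  have hg1 : ∑ a, g a = 1 := by
    simp [hg, Finset.sum_ite_eq']
  have hgi : ∀ a, g a * g a = g a := by
    intro a; simp only [hg]; split <;> norm_num
  have hcard : (Fintype.card (Fin k) : ℝ) = (k:ℝ) := by simp
  -- sum of B
  have S1 : ∑ ω : ι → Fin k, (∑ p : ι, g (ω p)) = (m:ℝ) * (k:ℝ)^(m-1) := by
    rw [Finset.sum_comm]
    simp only [L1, hg1, hcard, mul_one]
    simp [mul_comm]; rfl
  -- sum of B^2
  have S2 : ∑ ω : ι → Fin k, (∑ p : ι, g (ω p))^2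
      = (m:ℝ) * (k:ℝ)^(m-1) + (m:ℝ) * ((m:ℝ) - 1) * (k:ℝ)^(m-2) := by
    have expand : ∀ ω : ι → Fin k, (∑ p : ι, g (ω p))^2
        = ∑ p : ι, ∑ q : ι, g (ω p) * g (ω q) := by
      intro ω; rw [sq, Finset.sum_mul_sum]
    simp only [expand]
    rw [Finset.sum_comm]
    have inner : ∀ p : ι, ∑ ω : ι → Fin k, ∑ q : ι, g (ω p) * g (ω q)
        = (k:ℝ)^(m-1) + ((m:ℝ) - 1) * (k:ℝ)^(m-2) := by
      intro p
      rw [Finset.sum_comm]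
      rw [← Finset.add_sum_erase _ _ (Finset.mem_univ p)]
      have t1 : ∑ ω : ι → Fin k, g (ω p) * g (ω p) = (k:ℝ)^(m-1) := by
        simp only [hgi]
        rw [L1 p g, hg1, hcard, mul_one]
      have t2 : ∀ q ∈ Finset.univ.erase p,
          ∑ ω : ι → Fin k, g (ω p) * g (ω q) = (k:ℝ)^(m-2) := by
        intro q hq
        rw [L2 p q (Finset.ne_of_mem_erase hq), hg1, hcard]
        ring
      rw [t1, Finset.sum_congr rfl t2, Finset.sum_const, Finset.card_erase_of_mem
        (Finset.mem_univ p), Finset.card_univ, nsmul_eq_mul]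
      congr 1
      have hm1 : 1 ≤ m := Fintype.card_pos_iff.mpr ⟨p⟩
      rw [Nat.cast_sub hm1]
      norm_num
    rw [Finset.sum_congr rfl (fun p _ => inner p), Finset.sum_const, Finset.card_univ,
      nsmul_eq_mul]
    ring
  -- total count
  have S0 : ∑ _ω : ι → Fin k, (1:ℝ) = (k:ℝ)^m := by
    rw [Finset.sum_const, Finset.card_univ, Fintype.card_fun, nsmul_eq_mul]
    push_cast [hm]
    simp
  -- expand the square
  have expand2 : ∀ ω : ι → Fin k,
      ((1:ℝ)/k)^m * ((∑ p : ι, g (ω p)) - (m:ℝ)/k)^2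
      = ((1:ℝ)/k)^m * ((∑ p : ι, g (ω p))^2)
        - (2*(m:ℝ)/k * ((1:ℝ)/k)^m) * (∑ p : ι, g (ω p))
        + ((m:ℝ)/k)^2 * ((1:ℝ)/k)^m * 1 := by
    intro ω; ring
  calc ∑ ω : ι → Fin k, ((1:ℝ)/k)^m * ((∑ p : ι, g (ω p)) - (m:ℝ)/k)^2
      = ((1:ℝ)/k)^m * (∑ ω : ι → Fin k, (∑ p : ι, g (ω p))^2)
        - (2*(m:ℝ)/k * ((1:ℝ)/k)^m) * (∑ ω : ι → Fin k, (∑ p : ι, g (ω p)))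
        + ((m:ℝ)/k)^2 * ((1:ℝ)/k)^m * (∑ _ω : ι → Fin k, (1:ℝ)) := by
        simp only [expand2]
        rw [Finset.sum_add_distrib, Finset.sum_sub_distrib, ← Finset.mul_sum,
          ← Finset.mul_sum, ← Finset.mul_sum]
    _ = (m:ℝ) * ((k:ℝ)-1) / (k:ℝ)^2 := by
        rw [S1, S2, S0]
        rcases m with _ | _ | m
        · norm_num
        · field_simp; linear_combination ((k:ℝ)-1) * (mul_inv_cancel₀ hK)
        · have e1 : m + 1 + 1 - 1 = m + 1 := by omega
          have e2 : m + 1 + 1 - 2 = m := by omega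
          rw [e1, e2]
          have hKp : (k:ℝ)^m ≠ 0 := pow_ne_zero _ hK
          push_cast
          field_simp
          linear_combination ((k:ℝ)^3-(k:ℝ)^2)*(k:ℝ)⁻¹^2 * (by rw [← mul_pow, mul_inv_cancel₀ hK, one_pow] : (k:ℝ)^m * (k:ℝ)⁻¹^m = 1) + ((k:ℝ)-1)*((k:ℝ)*(k:ℝ)⁻¹+1) * mul_inv_cancel₀ hK

/-- The mean squared error of pureDUMP, averaged over the domain, is `s(k−1)/(nk²)`. -/
theorem pureDUMP_mse (n s k : ℕ) (hn : 0 < n) (hk : 0 < k)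
    (x : Fin n → Fin k) :
    (1 / (k : ℝ)) *
        ∑ v : Fin k,
          ∑ ω : Fin n × Fin s → Fin k,
            ((1 : ℝ) / k) ^ (n * s) *
              (((1 / n) *
                  ((∑ i : Fin n, if x i = v then (1 : ℝ) else 0) +
                    (∑ p : Fin n × Fin s, if ω p = v then (1 : ℝ) else 0) -
                    (n : ℝ) * s / k)) -
                (1 / n) * ∑ i : Fin n, if x i = v then (1 : ℝ) else 0) ^ 2
      = (s : ℝ) * (k - 1) / (n * k ^ 2) := by
  have hN : (n:ℝ) ≠ 0 := Nat.cast_ne_zero.mpr hn.ne'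
  have hK : (k:ℝ) ≠ 0 := Nat.cast_ne_zero.mpr hk.ne'
  have hcard : Fintype.card (Fin n × Fin s) = n * s := by simp
  have inner : ∀ v : Fin k,
      ∑ ω : Fin n × Fin s → Fin k,
        ((1 : ℝ) / k) ^ (n * s) *
          (((1 / n) *
              ((∑ i : Fin n, if x i = v then (1 : ℝ) else 0) +
                (∑ p : Fin n × Fin s, if ω p = v then (1 : ℝ) else 0) -
                (n : ℝ) * s / k)) -
            (1 / n) * ∑ i : Fin n, if x i = v then (1 : ℝ) else 0) ^ 2
      = (s : ℝ) * (k - 1) / (n * k ^ 2) := by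
    intro v
    have kv := key_var k hk (Fin n × Fin s) v
    rw [hcard] at kv
    push_cast at kv
    have rearr : ∀ ω : Fin n × Fin s → Fin k,
        ((1 : ℝ) / k) ^ (n * s) *
          (((1 / n) *
              ((∑ i : Fin n, if x i = v then (1 : ℝ) else 0) +
                (∑ p : Fin n × Fin s, if ω p = v then (1 : ℝ) else 0) -
                (n : ℝ) * s / k)) -
            (1 / n) * ∑ i : Fin n, if x i = v then (1 : ℝ) else 0) ^ 2
        = ((1:ℝ)/n)^2 * (((1 : ℝ) / k) ^ (n * s) *
            ((∑ p : Fin n × Fin s, if ω p = v then (1 : ℝ) else 0)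
              - (n:ℝ) * s / k) ^ 2) := by
      intro ω; ring
    rw [Finset.sum_congr rfl (fun ω _ => rearr ω), ← Finset.mul_sum, kv]
    field_simp
  rw [Finset.sum_congr rfl (fun v _ => inner v), Finset.sum_const, Finset.card_univ,
    Fintype.card_fin, nsmul_eq_mul]
  field_simp
end
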